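/- arXiv:1805.10042 — 4 statements merged into one kernel-verified Lean document; each statement's English description precedes it below -/
import Mathlib

section
/- Let w_m be the concatenation, for i = 0 to m, of the binary expansion of i followed by a separator symbol $. If a factor (substring) of w_m contains at least two occurrences of $, then it has exactly one occurrence in w_m (i.e., it occurs at a unique position). -/
/-- The binary expansion of `i` (most significant bit first, `binExp 0 = [0]`),
as a list over `ℕ`, using digits `0` and `1`. -/
def binExp (i : ℕ) : List ℕ :=
  if i = 0 then [0] else (Nat.digits 2 i).reverse

/-- The string `w_m = bin(0)$bin(1)$⋯bin(m)$` over the alphabet `{0,1,$}`,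
where the separator `$` is encoded by the letter `2`. -/
def wString (m : ℕ) : List ℕ :=
  ((List.range (m + 1)).map (fun i => binExp i ++ [2])).flatten

namespace WAux

lemma two_not_mem_binExp (i : ℕ) : 2 ∉ binExp i := by
  unfold binExp
  split
  · simp
  · intro h
    have := Nat.digits_lt_base (by norm_num) (List.mem_reverse.mp h)
    omega

lemma binExp_inj {a b : ℕ} (h : binExp a = binExp b) : a = b := by
  by_cases ha : a = 0 <;> by_cases hb : b = 0
  · rw [ha, hb]
  · exfalso
    rw [binExp, binExp, if_pos ha, if_neg hb] at h
    have hd : Nat.digits 2 b = [0] := by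
      have := congrArg List.reverse h
      simpa using this.symm
    have h2 := Nat.ofDigits_digits 2 b
    rw [hd] at h2
    simp [Nat.ofDigits] at h2
    omega
  · exfalso
    rw [binExp, binExp, if_neg ha, if_pos hb] at h
    have hd : Nat.digits 2 a = [0] := by
      have := congrArg List.reverse h
      simpa using this
    have h2 := Nat.ofDigits_digits 2 a
    rw [hd] at h2
    simp [Nat.ofDigits] at h2
    omega
  · rw [binExp, binExp, if_neg ha, if_neg hb] at h
    have hd : Nat.digits 2 a = Nat.digits 2 b := by
      have := congrArg List.reverse h
      simpa using this
    have h2 := Nat.ofDigits_digits 2 a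
    rw [hd, Nat.ofDigits_digits] at h2
    exact h2.symm

/-- Starting position of the `k`-th block `binExp k ++ [2]` in `wString m`. -/
def S (k : ℕ) : ℕ := ((List.range k).map (fun i => (binExp i).length + 1)).sum

/-- End position of the `k`-th block (position of its separator `2`). -/
def E (k : ℕ) : ℕ := S k + (binExp k).length

lemma S_succ (k : ℕ) : S (k + 1) = S k + ((binExp k).length + 1) := by
  simp [S, List.range_succ]

lemma S_succ_eq_E (k : ℕ) : S (k + 1) = E k + 1 := by
  rw [S_succ]; simp [E]; omega

lemma S_le {a b : ℕ} (h : a ≤ b) : S a ≤ S b := by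
  induction b with
  | zero => rw [Nat.le_zero.mp h]
  | succ b ih =>
    rcases Nat.eq_or_lt_of_le h with rfl | h'
    · exact le_refl _
    · have h1 := ih (by omega)
      rw [S_succ]
      omega

lemma E_le {a b : ℕ} (h : a ≤ b) : E a ≤ E b := by
  have h1 := S_le (Nat.succ_le_succ h)
  rw [S_succ_eq_E, S_succ_eq_E] at h1
  omega

lemma E_lt {a b : ℕ} (h : a < b) : E a < E b := by
  have h1 : S (a + 1) ≤ S b := S_le h
  have h2 : S b ≤ E b := Nat.le_add_right _ _
  rw [S_succ_eq_E] at h1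
  omega

lemma w_succ (m : ℕ) : wString (m + 1) = wString m ++ (binExp (m + 1) ++ [2]) := by
  simp [wString, List.range_succ]

lemma w_len (m : ℕ) : (wString m).length = S (m + 1) := by
  induction m with
  | zero => simp [wString, S, List.range_succ, binExp]
  | succ m ih =>
    rw [w_succ, List.length_append, ih, S_succ (m + 1)]
    simp

lemma w_drop {m k : ℕ} (hk : k ≤ m) :
    (wString m).drop (S k) = binExp k ++ 2 :: (wString m).drop (S (k + 1)) := by
  induction m with
  | zero =>
    interval_cases k
    have hA : (wString 0).drop (S 1) = [] := by
      rw [← w_len]; exact List.drop_length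
    rw [show S 0 = 0 by simp [S], List.drop_zero, hA]
    show ((List.range 1).map (fun i => binExp i ++ [2])).flatten = _
    rw [show List.range 1 = [0] from rfl]
    simp
  | succ m ih =>
    rcases Nat.lt_or_ge k (m + 1) with h' | h'
    · have hk' : k ≤ m := by omega
      have h1 : S k ≤ (wString m).length := by
        rw [w_len]; exact S_le (by omega)
      have h2 : S (k + 1) ≤ (wString m).length := by
        rw [w_len]; exact S_le (by omega)
      rw [w_succ, List.drop_append, Nat.sub_eq_zero_of_le h1,
        List.drop_zero, ih hk', List.drop_append,
        Nat.sub_eq_zero_of_le h2, List.drop_zero]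
      simp
    · have hk' : k = m + 1 := by omega
      subst hk'
      have hA : (wString (m + 1)).drop (S (m + 2)) = [] := by
        rw [← w_len]; exact List.drop_length
      rw [hA, w_succ, ← w_len m, List.drop_left]

lemma w_getElem {m k : ℕ} (hk : k ≤ m) {j : ℕ} (hj : j ≤ (binExp k).length) :
    (wString m)[S k + j]? = (binExp k ++ [2])[j]? := by
  rw [← List.getElem?_drop, w_drop hk]
  have hre : binExp k ++ 2 :: (wString m).drop (S (k + 1))
      = (binExp k ++ [2]) ++ (wString m).drop (S (k + 1)) := by simp
  rw [hre, List.getElem?_append, if_pos (by simp; omega)]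

lemma w_two {m k : ℕ} (hk : k ≤ m) : (wString m)[E k]? = some 2 := by
  have := w_getElem hk (le_refl (binExp k).length)
  rw [E, this]
  rw [List.getElem?_append]
  simp

lemma find_k (m : ℕ) : ∀ q, q < S (m + 1) → ∃ k ≤ m, S k ≤ q ∧ q < S (k + 1) := by
  induction m with
  | zero =>
    intro q hq
    exact ⟨0, le_refl _, by simp [S], hq⟩
  | succ m ih =>
    intro q hq
    rcases Nat.lt_or_ge q (S (m + 1)) with h' | h'
    · obtain ⟨k, hk, h1, h2⟩ := ih q h'
      exact ⟨k, by omega, h1, h2⟩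
    · exact ⟨m + 1, le_refl _, h', hq⟩

lemma two_pos {m q : ℕ} (h : (wString m)[q]? = some 2) : ∃ k ≤ m, q = E k := by
  have hq : q < (wString m).length := by
    by_contra h'
    rw [List.getElem?_eq_none (by omega)] at h
    exact absurd h (by simp)
  rw [w_len] at hq
  obtain ⟨k, hk, h1, h2⟩ := find_k m q hq
  refine ⟨k, hk, ?_⟩
  have hj : q = S k + (q - S k) := by omega
  rw [hj, w_getElem hk (by rw [S_succ] at h2; omega)] at h
  rw [List.getElem?_append] at h
  split at h
  · exfalso
    rename_i hlt
    have : (2 : ℕ) ∈ binExp k := by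
      have := List.getElem?_eq_getElem hlt
      rw [this] at h
      have h2' : (binExp k)[q - S k]'hlt = 2 := by
        injection h
      rw [← h2']
      exact List.getElem_mem _
    exact two_not_mem_binExp k this
  · rename_i hlt
    push_neg at hlt
    rw [S_succ] at h2
    simp [E]
    omega

lemma prefix_getElem? {l t : List ℕ} (h : t <+: l) {j : ℕ} (hj : j < t.length) :
    l[j]? = t[j]? := by
  have hj' : j < l.length := lt_of_lt_of_le hj h.length_le
  rw [List.getElem?_eq_getElem hj', List.getElem?_eq_getElem hj]
  exact congrArg some (h.getElem hj).symm

lemma split_first {t : List ℕ} (h : 2 ∈ t) : ∃ u s, t = u ++ 2 :: s ∧ 2 ∉ u := by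
  induction t with
  | nil => simp at h
  | cons a t ih =>
    by_cases ha : a = 2
    · exact ⟨[], t, by simp [ha], by simp⟩
    · have h' : 2 ∈ t := by
        rcases List.mem_cons.mp h with h'' | h''
        · exact absurd h''.symm ha
        · exact h''
      obtain ⟨u, s, h1, h2⟩ := ih h'
      refine ⟨a :: u, s, by simp [h1], ?_⟩
      simp only [List.mem_cons]
      push_neg
      exact ⟨fun h3 => ha h3.symm, h2⟩

/-- An occurrence of `u ++ 2 :: (v ++ 2 :: r)` in `wString m` determines a block index. -/
lemma occ_det {m : ℕ} {u v r : List ℕ} (hv : 2 ∉ v) {p : ℕ}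
    (hp : (u ++ 2 :: (v ++ 2 :: r)) <+: (wString m).drop p) :
    ∃ k, p + u.length = E k ∧ v = binExp (k + 1) := by
  set t : List ℕ := u ++ 2 :: (v ++ 2 :: r) with ht
  have key : ∀ j, j < t.length → (wString m)[p + j]? = t[j]? := by
    intro j hj
    rw [← List.getElem?_drop]
    exact prefix_getElem? hp hj
  have hlen : t.length = u.length + 1 + (v.length + 1 + r.length) := by
    simp [ht]; omega
  -- first separator
  have ht1 : t[u.length]? = some 2 := by
    rw [ht, List.getElem?_append]
    simp
  have hw1 : (wString m)[p + u.length]? = some 2 := by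
    rw [key _ (by omega), ht1]
  obtain ⟨k, hk, hEk⟩ := two_pos hw1
  -- second separator
  have ht2 : t[u.length + 1 + v.length]? = some 2 := by
    have ht' : t = (u ++ 2 :: v) ++ 2 :: r := by simp [ht]
    rw [ht', List.getElem?_append]
    have : (u ++ 2 :: v).length = u.length + 1 + v.length := by simp; omega
    rw [this]
    simp
  have hw2 : (wString m)[p + (u.length + 1 + v.length)]? = some 2 := by
    rw [key _ (by omega), ht2]
  obtain ⟨k', hk', hEk'⟩ := two_pos hw2
  have hEltE : E k < E k' := by omega
  have hkk' : k < k' := by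
    by_contra h'
    push_neg at h'
    exact absurd (E_le h') (by omega)
  -- in-between values of t are entries of v, hence not 2
  have hmid : ∀ j < v.length, (wString m)[p + (u.length + 1 + j)]? = v[j]? := by
    intro j hj
    rw [key _ (by omega), ht]
    rw [List.getElem?_append]
    have h1 : ¬ (u.length + 1 + j < u.length) := by omega
    rw [if_neg h1]
    have h2 : u.length + 1 + j - u.length = j + 1 := by omega
    rw [h2]
    simp only [List.getElem?_cons_succ]
    rw [List.getElem?_append]
    rw [if_pos hj]
  -- k' = k + 1
  have hk1 : k' = k + 1 := by
    by_contra h'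
    have hlt : k + 1 < k' := by omega
    have hE1 : E k < E (k + 1) := E_lt (by omega)
    have hE2 : E (k + 1) < E k' := E_lt hlt
    set j : ℕ := E (k + 1) - (E k + 1) with hj
    have hjv : j < v.length := by omega
    have := hmid j hjv
    have hpos : p + (u.length + 1 + j) = E (k + 1) := by omega
    rw [hpos] at this
    have h2m : k + 1 ≤ m := by omega
    rw [w_two h2m] at this
    have : (2 : ℕ) ∈ v := by
      rcases Nat.lt_or_ge j v.length with _ | h''
      · have hg := List.getElem?_eq_getElem hjv
        rw [hg] at this
        have : v[j]'hjv = 2 := by injection this.symm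
        rw [← this]; exact List.getElem_mem _
      · omega
    exact hv this
  subst hk1
  refine ⟨k, hEk, ?_⟩
  -- v = binExp (k+1)
  have hlenv : v.length = (binExp (k + 1)).length := by
    have h1 : E (k + 1) = S (k + 1) + (binExp (k + 1)).length := rfl
    have h2 : S (k + 1) = E k + 1 := S_succ_eq_E k
    omega
  apply List.ext_getElem?
  intro n
  rcases Nat.lt_or_ge n v.length with hn | hn
  · have h1 := hmid n hn
    have hpos : p + (u.length + 1 + n) = S (k + 1) + n := by
      rw [S_succ_eq_E]; omega
    rw [hpos] at h1
    have h2 := w_getElem (show k + 1 ≤ m by omega) (show n ≤ (binExp (k+1)).length by omega)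
    rw [h2] at h1
    rw [List.getElem?_append, if_pos (by omega)] at h1
    exact h1.symm
  · rw [List.getElem?_eq_none hn, List.getElem?_eq_none (by omega)]

end WAux

open WAux in
/-- A factor of `w_m` containing at least two occurrences of the separator `$`
occurs at a unique position in `w_m`. -/
theorem factor_two_seps_unique_occurrence (m : ℕ) (t : List ℕ)
    (ht : t <:+: wString m) (hc : 2 ≤ t.count 2) :
    ∃! i : ℕ, t <+: (wString m).drop i := by
  obtain ⟨s, r0, hw⟩ := ht
  -- decompose t around its first two separators
  have hmem : (2 : ℕ) ∈ t := List.count_pos_iff.mp (by omega)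
  obtain ⟨u, s1, hts, hu⟩ := split_first hmem
  have hcount : 1 ≤ s1.count 2 := by
    rw [hts] at hc
    rw [List.count_append, List.count_cons_self, List.count_eq_zero_of_not_mem hu] at hc
    omega
  have hmem2 : (2 : ℕ) ∈ s1 := List.count_pos_iff.mp (by omega)
  obtain ⟨v, r, hs1, hv⟩ := split_first hmem2
  have htd : t = u ++ 2 :: (v ++ 2 :: r) := by rw [hts, hs1]
  refine ⟨s.length, ?_, ?_⟩
  · refine ⟨r0, ?_⟩
    rw [← hw]
    rw [show s ++ t ++ r0 = s ++ (t ++ r0) by simp]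
    rw [List.drop_left]
  · intro p hp
    have hp0 : t <+: (wString m).drop s.length := by
      refine ⟨r0, ?_⟩
      rw [← hw, show s ++ t ++ r0 = s ++ (t ++ r0) by simp, List.drop_left]
    rw [htd] at hp hp0
    obtain ⟨k1, h1, hv1⟩ := occ_det hv hp
    obtain ⟨k2, h2, hv2⟩ := occ_det hv hp0
    have hkk : k1 + 1 = k2 + 1 :=
      binExp_inj (hv1 ▸ hv2 ▸ rfl : binExp (k1 + 1) = binExp (k2 + 1))
    have hk12 : k1 = k2 := by omega
    rw [hk12] at h1
    omega
end

section
/- Let w_m have length n. Then the total number of occurrences of k-anti-powers in w_m (summed over all anti-periods p with 3 + 2⌈log₂ m⌉ < p ≤ n/k) is at least n²/(2k) − 7n/2 − 2n⌈log₂ m⌉; in particular it is Ω(n²/k) when k is fixed and m → ∞. -/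
def IsAntiPower {α : Type*} (S : List α) (k p : ℕ) : Prop :=
  S.length = k * p ∧
    ∃ u : Fin k → List α, (∀ i, (u i).length = p) ∧ Function.Injective u ∧
      S = (List.ofFn u).flatten

namespace APaux

def F (i : ℕ) : List ℕ := binExp i ++ [2]

def st (j : ℕ) : ℕ := (((List.range j).map F).flatten).length

lemma binExp_length_pos (j : ℕ) : 0 < (binExp j).length := by
  unfold binExp; split
  · simp
  · next h =>
      simpa using List.length_pos_iff.mpr (Nat.digits_ne_nil_iff_ne_zero.mpr h)

lemma mem_binExp_lt {j l : ℕ} (h : l ∈ binExp j) : l < 2 := by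
  unfold binExp at h; split at h
  · simp at h; omega
  · exact Nat.digits_lt_base (by norm_num) (List.mem_reverse.mp h)

lemma binExp_inj : Function.Injective binExp := by
  intro a b h
  unfold binExp at h
  by_cases ha : a = 0 <;> by_cases hb : b = 0
  · omega
  · exfalso
    rw [if_pos ha, if_neg hb] at h
    have hd : Nat.digits 2 b = [0] := by
      have := congrArg List.reverse h; simpa using this.symm
    have h2 := Nat.getLast_digit_ne_zero 2 hb
    simp [hd] at h2
  · exfalso
    rw [if_neg ha, if_pos hb] at h
    have hd : Nat.digits 2 a = [0] := by
      have := congrArg List.reverse h; simpa using this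
    have h2 := Nat.getLast_digit_ne_zero 2 ha
    simp [hd] at h2
  · rw [if_neg ha, if_neg hb] at h
    have h2 : Nat.digits 2 a = Nat.digits 2 b := List.reverse_injective h
    calc a = Nat.ofDigits 2 (Nat.digits 2 a) := (Nat.ofDigits_digits 2 a).symm
    _ = Nat.ofDigits 2 (Nat.digits 2 b) := by rw [h2]
    _ = b := Nat.ofDigits_digits 2 b

lemma F_length (j : ℕ) : (F j).length = (binExp j).length + 1 := by simp [F]

lemma F_length_le {m j : ℕ} (hj : j ≤ m) : (F j).length ≤ Nat.clog 2 m + 2 := by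
  rw [F_length]
  rcases Nat.eq_zero_or_pos j with h | h
  · subst h; simp [binExp]
  · have hj0 : j ≠ 0 := by omega
    unfold binExp; rw [if_neg hj0]
    rw [List.length_reverse, Nat.digits_len 2 j (by norm_num) hj0]
    have h1 : Nat.log 2 j ≤ Nat.log 2 m := Nat.log_mono_right hj
    have h2 : Nat.log 2 m ≤ Nat.clog 2 m := Nat.log_le_clog 2 m
    omega

lemma st_zero : st 0 = 0 := by simp [st]

lemma st_succ (j : ℕ) : st (j + 1) = st j + (F j).length := by
  simp [st, List.range_succ]

lemma st_mono : Monotone st :=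
  monotone_nat_of_le_succ (fun n => by rw [st_succ]; omega)

lemma wString_length (m : ℕ) : (wString m).length = st (m + 1) := rfl

lemma exists_block : ∀ (M x : ℕ), x < st M → ∃ j, j < M ∧ st j ≤ x ∧ x < st (j + 1) := by
  intro M
  induction M with
  | zero => intro x hx; rw [st_zero] at hx; omega
  | succ M ih =>
    intro x hx
    by_cases h : x < st M
    · obtain ⟨j, h1, h2, h3⟩ := ih x h
      exact ⟨j, by omega, h2, h3⟩
    · exact ⟨M, by omega, by omega, hx⟩

lemma wString_eq (m j : ℕ) (hj : j ≤ m) :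
    wString m = ((List.range j).map F).flatten ++
      (F j ++ ((List.range' (j + 1) (m - j)).map F).flatten) := by
  have h1 : List.range (m + 1) = List.range' 0 j ++ List.range' j (m + 1 - j) := by
    rw [List.range_eq_range']
    rw [show List.range' 0 j = List.range' 0 j 1 from rfl]
    rw [show List.range' j (m+1-j) = List.range' (0 + 1 * j) (m+1-j) 1 by congr 1; omega]
    rw [List.range'_append]
    congr 1; omega
  have h2 : List.range' j (m + 1 - j) = j :: List.range' (j + 1) (m - j) := by
    rw [show m + 1 - j = (m - j) + 1 by omega, List.range'_succ]
  show ((List.range (m+1)).map F).flatten = _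
  rw [h1, h2, ← List.range_eq_range']
  simp

lemma get_block {m j : ℕ} (hj : j ≤ m) {t : ℕ} (ht : t < (F j).length) :
    (wString m)[st j + t]? = (F j)[t]? := by
  rw [wString_eq m j hj]
  have hlen : (((List.range j).map F).flatten).length = st j := rfl
  rw [List.getElem?_append, hlen, if_neg (by omega)]
  rw [Nat.add_sub_cancel_left, List.getElem?_append, if_pos ht]

lemma sep_pos {m x : ℕ} (h : (wString m)[x]? = some 2) :
    ∃ j ≤ m, x = st j + (binExp j).length := by
  have hx : x < (wString m).length := by
    rcases List.getElem?_eq_some_iff.mp h with ⟨h1, _⟩; exact h1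
  rw [wString_length] at hx
  obtain ⟨j, hj, h1, h2⟩ := exists_block (m + 1) x hx
  have hjm : j ≤ m := by omega
  rw [st_succ] at h2
  set t := x - st j with hts
  have htx : x = st j + t := by omega
  have ht : t < (F j).length := by omega
  refine ⟨j, hjm, ?_⟩
  have hFl := F_length j
  rcases Nat.lt_or_ge t (binExp j).length with hlt | hge
  · exfalso
    rw [htx, get_block hjm ht] at h
    have : (F j)[t]? = (binExp j)[t]? := by
      rw [F, List.getElem?_append, if_pos hlt]
    rw [this] at h
    rcases List.getElem?_eq_some_iff.mp h with ⟨hb, hv⟩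
    have : (2:ℕ) < 2 := by
      have := mem_binExp_lt (l := (binExp j)[t]) (List.getElem_mem hb)
      omega
    omega
  · omega

lemma factor_unique {m p x y : ℕ} (hp : 2 * (Nat.clog 2 m + 2) ≤ p)
    (hx : x + p ≤ (wString m).length) (hy : y + p ≤ (wString m).length)
    (h : ∀ t < p, (wString m)[x + t]? = (wString m)[y + t]?) : x = y := by
  set B := Nat.clog 2 m + 2 with hB
  have hB2 : 2 ≤ B := by omega
  have hn := wString_length m
  -- find a separator at small offset from x
  have hxn : x < st (m + 1) := by omega
  obtain ⟨j, hj, hj1, hj2⟩ := exists_block (m + 1) x hxn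
  have hjm : j ≤ m := by omega
  rw [st_succ, F_length] at hj2
  set o := st j + (binExp j).length - x with ho
  have hoB : o ≤ B - 1 := by
    have := F_length_le hjm; rw [F_length] at this; omega
  have hop : o < p := by omega
  have hxo : x + o = st j + (binExp j).length := by omega
  have hsx : (wString m)[x + o]? = some 2 := by
    rw [hxo, get_block hjm (by rw [F_length]; omega)]
    rw [F, List.getElem?_append, if_neg (by omega)]
    simp
  have hsy : (wString m)[y + o]? = some 2 := by rw [← h o hop]; exact hsx
  obtain ⟨a', ha'm, ha'⟩ := sep_pos hsx
  obtain ⟨b', hb'm, hb'⟩ := sep_pos hsy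
  have hxa : x + o + 1 = st (a' + 1) := by rw [st_succ, F_length]; omega
  have hyb : y + o + 1 = st (b' + 1) := by rw [st_succ, F_length]; omega
  -- a'+1, b'+1 ≤ m
  have ham : a' + 1 ≤ m := by
    by_contra hcon
    have : m + 1 ≤ a' + 1 := by omega
    have h2 := st_mono this
    omega
  have hbm : b' + 1 ≤ m := by
    by_contra hcon
    have : m + 1 ≤ b' + 1 := by omega
    have h2 := st_mono this
    omega
  set a := a' + 1
  set b := b' + 1
  -- key: not (|bin a| < |bin b|), in both orientations
  have key : ∀ (x y a b : ℕ), x + o + 1 = st a → y + o + 1 = st b → a ≤ m → b ≤ m →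
      (∀ t < p, (wString m)[x + t]? = (wString m)[y + t]?) →
      ¬ ((binExp a).length < (binExp b).length) := by
    intro x y a b hxa hyb ham hbm h hlt
    have hla : (binExp a).length ≤ B - 1 := by
      have := F_length_le ham; rw [F_length] at this; omega
    set t0 := o + 1 + (binExp a).length with ht0
    have ht0p : t0 < p := by omega
    have h1 : (wString m)[x + t0]? = some 2 := by
      have : x + t0 = st a + (binExp a).length := by omega
      rw [this, get_block ham (by rw [F_length]; omega)]
      rw [F, List.getElem?_append, if_neg (by omega)]
      simp
    have h2 : (wString m)[y + t0]? = (binExp b)[(binExp a).length]? := by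
      have hlb : (binExp a).length < (F b).length := by rw [F_length]; omega
      have : y + t0 = st b + (binExp a).length := by omega
      rw [this, get_block hbm hlb]
      rw [F, List.getElem?_append, if_pos hlt]
    rw [h t0 ht0p, h2] at h1
    rcases List.getElem?_eq_some_iff.mp h1 with ⟨hb1, hv⟩
    have := mem_binExp_lt (l := (binExp b)[(binExp a).length]) (List.getElem_mem hb1)
    omega
  have hlen : (binExp a).length = (binExp b).length := by
    rcases Nat.lt_trichotomy (binExp a).length (binExp b).length with hl | hl | hl
    · exact absurd hl (key x y a b hxa hyb ham hbm h)
    · exact hl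
    · exact absurd hl (key y x b a hyb hxa hbm ham (fun t ht => (h t ht).symm))
  have hab : a = b := by
    apply binExp_inj
    apply List.ext_getElem?
    intro t
    rcases Nat.lt_or_ge t (binExp a).length with ht | ht
    · have hta : (binExp a)[t]? = (wString m)[x + (o + 1 + t)]? := by
        have hx' : x + (o + 1 + t) = st a + t := by omega
        rw [hx', get_block ham (by rw [F_length]; omega)]
        rw [F, List.getElem?_append, if_pos ht]
      have htb : (binExp b)[t]? = (wString m)[y + (o + 1 + t)]? := by
        have hy' : y + (o + 1 + t) = st b + t := by omega
        rw [hy', get_block hbm (by rw [F_length]; omega)]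
        rw [F, List.getElem?_append, if_pos (by omega)]
      have hla : (binExp a).length ≤ B - 1 := by
        have := F_length_le ham; rw [F_length] at this; omega
      rw [hta, htb, h (o + 1 + t) (by omega)]
    · rw [List.getElem?_eq_none ht, List.getElem?_eq_none (by omega)]
  have : st a = st b := by rw [hab]
  omega

end APaux

namespace APaux

lemma take_drop_flatten {α : Type*} (L : List α) (p : ℕ) :
    ∀ (k i : ℕ), (L.drop i).take (k * p) =
      (List.ofFn (fun j : Fin k => (L.drop (i + (j : ℕ) * p)).take p)).flatten := by
  intro k
  induction k with
  | zero => intro i; simp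
  | succ k ih =>
    intro i
    rw [show (k + 1) * p = p + k * p by ring, List.take_add, List.drop_drop]
    rw [List.ofFn_succ, List.flatten_cons]
    congr 1
    · simp
    · rw [ih (i + p)]
      congr 1
      apply congrArg
      funext j
      congr 2
      simp [Fin.val_succ]
      ring

lemma isAntiPower_factor {m k p i : ℕ} (hp : 2 * (Nat.clog 2 m + 2) ≤ p)
    (h : i + k * p ≤ (wString m).length) :
    IsAntiPower (((wString m).drop i).take (k * p)) k p := by
  have hp0 : 0 < p := by omega
  constructor
  · rw [List.length_take, List.length_drop]
    omega
  · refine ⟨fun j => ((wString m).drop (i + (j : ℕ) * p)).take p, ?_, ?_, ?_⟩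
    · intro j
      have h1 : (j : ℕ) * p + p ≤ k * p := by
        calc (j : ℕ) * p + p = ((j : ℕ) + 1) * p := by ring
        _ ≤ k * p := Nat.mul_le_mul_right p j.2
      rw [List.length_take, List.length_drop]
      omega
    · intro j j' hjj
      have hfac : ∀ t < p, (wString m)[(i + (j : ℕ) * p) + t]? = (wString m)[(i + (j' : ℕ) * p) + t]? := by
        intro t ht
        have e1 : (((wString m).drop (i + (j : ℕ) * p)).take p)[t]? = (wString m)[(i + (j : ℕ) * p) + t]? := by
          rw [List.getElem?_take, if_pos ht, List.getElem?_drop]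
        have e2 : (((wString m).drop (i + (j' : ℕ) * p)).take p)[t]? = (wString m)[(i + (j' : ℕ) * p) + t]? := by
          rw [List.getElem?_take, if_pos ht, List.getElem?_drop]
        rw [← e1, ← e2]
        exact congrArg (fun l => l[t]?) hjj
      have hxb : (i + (j : ℕ) * p) + p ≤ (wString m).length := by
        have h1 : (j : ℕ) * p + p ≤ k * p := by
          calc (j : ℕ) * p + p = ((j : ℕ) + 1) * p := by ring
          _ ≤ k * p := Nat.mul_le_mul_right p j.2
        omega
      have hyb : (i + (j' : ℕ) * p) + p ≤ (wString m).length := by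
        have h1 : (j' : ℕ) * p + p ≤ k * p := by
          calc (j' : ℕ) * p + p = ((j' : ℕ) + 1) * p := by ring
          _ ≤ k * p := Nat.mul_le_mul_right p j'.2
        omega
      have := factor_unique hp hxb hyb hfac
      have hv : (j : ℕ) = (j' : ℕ) := by
        have : (j : ℕ) * p = (j' : ℕ) * p := by omega
        exact Nat.eq_of_mul_eq_mul_right hp0 this
      exact Fin.ext hv
    · exact take_drop_flatten (wString m) p k i

end APaux

open scoped Classical in
/-- The total number of occurrences of `k`-anti-powers in `w_m`, summed over
anti-periods `p` with `3 + 2⌈log₂ m⌉ < p ≤ n/k` (where `n = |w_m|`), is at least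
`n²/(2k) − 7n/2 − 2n⌈log₂ m⌉`, which is `Ω(n²/k)`. -/
theorem wString_antiPower_lower_bound (m k : ℕ) (hk : 1 ≤ k) :
    (wString m).length ^ 2 / (2 * (k : ℝ)) - 7 * (wString m).length / 2
        - 2 * (wString m).length * Nat.clog 2 m ≤
      ∑ p ∈ Finset.Ioc (3 + 2 * Nat.clog 2 m) ((wString m).length / k),
        (((Finset.range ((wString m).length + 1)).filter
            (fun i => i + k * p ≤ (wString m).length ∧
              IsAntiPower (((wString m).drop i).take (k * p)) k p)).card : ℝ) := by
  have hk0 : 0 < k := hk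
  set n := (wString m).length with hn
  set c := Nat.clog 2 m with hc
  set a := 3 + 2 * c with ha
  set P := n / k with hP
  have hkR : (1 : ℝ) ≤ (k : ℝ) := by exact_mod_cast hk
  have hcR : (0 : ℝ) ≤ (c : ℝ) := Nat.cast_nonneg c
  have hnR : (0 : ℝ) ≤ (n : ℝ) := Nat.cast_nonneg n
  have haR : (a : ℝ) = 3 + 2 * (c : ℝ) := by rw [ha]; push_cast; ring
  -- each summand equals n + 1 - k*p
  have hcard : ∀ p ∈ Finset.Ioc a P,
      (((Finset.range (n + 1)).filter
          (fun i => i + k * p ≤ n ∧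
            IsAntiPower (((wString m).drop i).take (k * p)) k p)).card : ℝ)
        = (n : ℝ) + 1 - (k : ℝ) * p := by
    intro p hpmem
    rw [Finset.mem_Ioc] at hpmem
    obtain ⟨hap, hpP⟩ := hpmem
    have hkpn : k * p ≤ n := by
      rw [Nat.mul_comm]; exact (Nat.le_div_iff_mul_le hk0).mp hpP
    have hpbig : 2 * (Nat.clog 2 m + 2) ≤ p := by omega
    have hset : (Finset.range (n + 1)).filter
        (fun i => i + k * p ≤ n ∧
          IsAntiPower (((wString m).drop i).take (k * p)) k p)
        = Finset.range (n + 1 - k * p) := by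
      ext i
      simp only [Finset.mem_filter, Finset.mem_range]
      constructor
      · rintro ⟨h1, h2, _⟩; omega
      · intro hi
        have h2 : i + k * p ≤ n := by omega
        exact ⟨by omega, h2, APaux.isAntiPower_factor hpbig h2⟩
    rw [hset, Finset.card_range, Nat.cast_sub (by omega)]
    push_cast
    ring
  rw [Finset.sum_congr rfl hcard]
  -- now pure algebra
  rcases Nat.lt_or_ge a P with haP | haP
  · -- nonempty range
    have hIoc : Finset.Ioc a P = Finset.Ico (a + 1) (P + 1) := by
      ext x; simp [Finset.mem_Ioc, Finset.mem_Ico]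
    have hgauss : 2 * (∑ p ∈ Finset.Ioc a P, p) + (a + 1) * a = (P + 1) * P := by
      have hco : ∑ i ∈ Finset.Ico 0 (a+1), i + ∑ i ∈ Finset.Ico (a+1) (P+1), i
          = ∑ i ∈ Finset.Ico 0 (P+1), i :=
        Finset.sum_Ico_consecutive _ (by omega) (by omega)
      have g1 : (∑ i ∈ Finset.range (P+1), i) * 2 = (P+1) * P := Finset.sum_range_id_mul_two _
      have g2 : (∑ i ∈ Finset.range (a+1), i) * 2 = (a+1) * a := Finset.sum_range_id_mul_two _
      rw [hIoc]
      rw [Finset.range_eq_Ico] at g1 g2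
      omega
    have hsum : ∑ p ∈ Finset.Ioc a P, ((n : ℝ) + 1 - (k : ℝ) * p)
        = ((P : ℝ) - (a : ℝ)) * ((n : ℝ) + 1)
          - (k : ℝ) * ((∑ p ∈ Finset.Ioc a P, p : ℕ) : ℝ) := by
      rw [Finset.sum_sub_distrib, Finset.sum_const, Nat.card_Ioc, nsmul_eq_mul,
        ← Finset.mul_sum, Nat.cast_sub (Nat.le_of_lt haP), Nat.cast_sum]
    rw [hsum]
    have hgaussR : 2 * ((∑ p ∈ Finset.Ioc a P, p : ℕ) : ℝ) + ((a : ℝ) + 1) * (a : ℝ)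
        = ((P : ℝ) + 1) * (P : ℝ) := by exact_mod_cast hgauss
    set SR := ((∑ p ∈ Finset.Ioc a P, p : ℕ) : ℝ) with hSR
    have hS : SR = (((P : ℝ) + 1) * P - ((a : ℝ) + 1) * a) / 2 := by linarith
    rw [hS]
    have h1 : (k : ℝ) * (P : ℝ) ≤ (n : ℝ) := by
      have h1n : k * P ≤ n := by rw [Nat.mul_comm]; exact Nat.div_mul_le_self n k
      exact_mod_cast h1n
    have h2 : (n : ℝ) < (k : ℝ) * ((P : ℝ) + 1) := by
      have h2n : n < k * (P + 1) := by
        rw [Nat.mul_comm]; exact (Nat.div_lt_iff_lt_mul hk0).mp (Nat.lt_succ_self P)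
      exact_mod_cast h2n
    have haPR : (a : ℝ) < (P : ℝ) := by exact_mod_cast haP
    have hkpos : (0 : ℝ) < 2 * (k : ℝ) := by linarith
    have hr1 : (n : ℝ) + 1 ≤ (k : ℝ) * ((P : ℝ) + 1) := by
      have h2n : n + 1 ≤ k * (P + 1) := by
        have h := (Nat.div_lt_iff_lt_mul hk0).mp (Nat.lt_succ_self P)
        calc n + 1 ≤ P.succ * k := h
        _ = k * (P + 1) := by rw [Nat.mul_comm]
      exact_mod_cast h2n
    have hc2 : (c : ℝ) = ((a : ℝ) - 3) / 2 := by rw [haR]; ring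
    rw [sub_le_iff_le_add, sub_le_iff_le_add, div_le_iff₀ hkpos, hc2]
    have hr0 : (0 : ℝ) ≤ (n : ℝ) - (k : ℝ) * P := by linarith
    nlinarith [mul_nonneg hr0 (by linarith : (0:ℝ) ≤ (k : ℝ) - ((n : ℝ) - (k : ℝ) * P)),
      mul_nonneg (mul_nonneg (by linarith : (0:ℝ) ≤ (k:ℝ)) (by linarith : (0:ℝ) ≤ (k:ℝ)))
        (by positivity : (0:ℝ) ≤ (a:ℝ) * (a:ℝ) + (a:ℝ)),
      mul_nonneg (by linarith : (0:ℝ) ≤ (k:ℝ)) (by linarith : (0:ℝ) ≤ (P:ℝ) - (a:ℝ))]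
  · -- empty range
    rw [Finset.Ioc_eq_empty (by omega), Finset.sum_empty]
    have hbound : n < k * (a + 1) := by
      rw [Nat.mul_comm]
      exact (Nat.div_lt_iff_lt_mul hk0).mp (by omega)
    have hbR : (n : ℝ) < (k : ℝ) * ((a : ℝ) + 1) := by exact_mod_cast hbound
    have hfinal : (n : ℝ) ^ 2 / (2 * (k : ℝ)) ≤ 7 * (n : ℝ) / 2 + 2 * (n : ℝ) * (c : ℝ) := by
      rw [div_le_iff₀ (by linarith : (0:ℝ) < 2 * (k : ℝ))]
      nlinarith [mul_le_mul_of_nonneg_left hbR.le hnR, haR,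
        mul_nonneg (mul_nonneg hnR (by linarith : (0:ℝ) ≤ (k:ℝ))) hcR,
        mul_nonneg hnR (by linarith : (0:ℝ) ≤ (k:ℝ))]
    linarith
end

section
/- For a string S and indices x ≤ y, if S[x..y] has pairwise-distinct letters and S[y+1] occurs in S[x..y] at position j (i.e., S[j] = S[y+1] with x ≤ j ≤ y), then j is unique, and S[j+1..y+1] has pairwise-distinct letters; moreover, for any x' ≤ j, S[x'..y+1] does not have pairwise-distinct letters. -/
lemma window_nodup_iff {α : Type*} (S : List α) (a n : ℕ) (h : a + n ≤ S.length) :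
    ((S.drop a).take n).Nodup ↔
      ∀ i k (hi : a + i < S.length) (hk : a + k < S.length),
        i < k → k < n → S.get ⟨a + i, hi⟩ ≠ S.get ⟨a + k, hk⟩ := by
  rw [List.nodup_iff_injective_get]
  have hlen : ((S.drop a).take n).length = n := by
    simp [List.length_take, List.length_drop]; omega
  have key : ∀ (i : ℕ) (hi : i < ((S.drop a).take n).length),
      ((S.drop a).take n).get ⟨i, hi⟩ = S.get ⟨a + i, by omega⟩ := by
    intro i hi
    simp [List.getElem_take, List.getElem_drop]
  constructor
  · intro hinj i k hi hk hik hkn hne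
    have : (⟨i, by omega⟩ : Fin ((S.drop a).take n).length) = ⟨k, by omega⟩ := by
      apply hinj
      rw [key, key]
      exact hne
    simp at this; omega
  · intro H ⟨i, hi⟩ ⟨k, hk⟩ heq
    rw [key, key] at heq
    rcases lt_trichotomy i k with h' | h' | h'
    · exact absurd heq (H i k (by omega) (by omega) h' (by omega))
    · simp [h']
    · exact absurd heq.symm (H k i (by omega) (by omega) h' (by omega))

lemma get_congr {α : Type*} (S : List α) {i i' : ℕ} (hi : i < S.length)
    (hi' : i' < S.length) (h : i = i') : S.get ⟨i, hi⟩ = S.get ⟨i', hi'⟩ := by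
  subst h; rfl

/-- Two-pointer invariant: if `S[x..y]` has pairwise-distinct letters and
`S[y+1]` occurs in `S[x..y]` at position `j`, then `j` is unique,
`S[j+1..y+1]` has pairwise-distinct letters, and for every `x' ≤ j`
the window `S[x'..y+1]` does not have pairwise-distinct letters. -/
theorem two_pointer_invariant {α : Type*} (S : List α) (x y j : ℕ)
    (hxy : x ≤ y) (hy : y + 1 < S.length) (hxj : x ≤ j) (hjy : j ≤ y)
    (hrep : S.get ⟨j, by omega⟩ = S.get ⟨y + 1, hy⟩)
    (hnodup : ((S.drop x).take (y - x + 1)).Nodup) :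
    (∀ j' : ℕ, (h1 : x ≤ j') → (h2 : j' ≤ y) →
        (hj' : S.get ⟨j', by omega⟩ = S.get ⟨y + 1, hy⟩) → j' = j) ∧
    ((S.drop (j + 1)).take (y + 1 - (j + 1) + 1)).Nodup ∧
    (∀ x' : ℕ, x' ≤ j → ¬ ((S.drop x').take (y + 1 - x' + 1)).Nodup) := by
  rw [window_nodup_iff S x (y - x + 1) (by omega)] at hnodup
  -- distinctness on [x, y] in absolute indices
  have hdist : ∀ i k (hi : i < S.length) (hk : k < S.length),
      x ≤ i → i < k → k ≤ y → S.get ⟨i, hi⟩ ≠ S.get ⟨k, hk⟩ := by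
    intro i k hi hk h1 h2 h3 heq
    have := hnodup (i - x) (k - x) (by omega) (by omega) (by omega) (by omega)
    apply this
    have e1 : S.get ⟨x + (i - x), by omega⟩ = S.get ⟨i, hi⟩ :=
      get_congr S (by omega) hi (by omega)
    have e2 : S.get ⟨x + (k - x), by omega⟩ = S.get ⟨k, hk⟩ :=
      get_congr S (by omega) hk (by omega)
    rw [e1, e2]; exact heq
  refine ⟨?_, ?_, ?_⟩
  · intro j' h1 h2 hj'
    by_contra hne
    rcases lt_or_gt_of_ne hne with h | h
    · exact hdist j' j (by omega) (by omega) h1 h hjy (hj'.trans hrep.symm)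
    · exact hdist j j' (by omega) (by omega) hxj h h2 (hrep.trans hj'.symm)
  · rw [window_nodup_iff S (j + 1) (y + 1 - (j + 1) + 1) (by omega)]
    intro i k hi hk hik hkn heq
    by_cases hky : j + 1 + k ≤ y
    · exact hdist (j + 1 + i) (j + 1 + k) hi hk (by omega) (by omega) hky heq
    · have hk1 : j + 1 + k = y + 1 := by omega
      have : S.get ⟨j + 1 + k, hk⟩ = S.get ⟨j, by omega⟩ :=
        (get_congr S hk hy hk1).trans hrep.symm
      rw [this] at heq
      exact hdist j (j + 1 + i) (by omega) hi hxj (by omega) (by omega) heq.symm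
  · intro x' hx' hnd
    rw [window_nodup_iff S x' (y + 1 - x' + 1) (by omega)] at hnd
    apply hnd (j - x') (y + 1 - x') (by omega) (by omega) (by omega) (by omega)
    rw [get_congr S _ (show j < S.length by omega) (by omega),
        get_congr S (show x' + (y + 1 - x') < S.length by omega) hy (by omega)]
    exact hrep
end

section
/- The longest substring with pairwise-distinct letters found by the two-pointer scan is indeed maximum: for any string S, the maximum over all y of (y − x(y) + 1), where x(y) is the least index such that S[x(y)..y] has pairwise-distinct letters, equals the length of the longest substring of S with pairwise-distinct letters. -/
/-- Correctness of the two-pointer scan: if `xf y` is, for each right endpoint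
`y < |S|`, the least left endpoint such that `S[xf y..y]` has pairwise-distinct
letters, then the maximum over `y` of the window length `y − xf y + 1` is the
length of the longest substring of `S` with pairwise-distinct letters. -/
theorem two_pointer_maximum {α : Type*} (S : List α) (xf : ℕ → ℕ)
    (hxf : ∀ y, y < S.length →
      xf y ≤ y ∧ ((S.drop (xf y)).take (y - xf y + 1)).Nodup ∧
        ∀ x', x' < xf y → ¬ ((S.drop x').take (y - x' + 1)).Nodup) :
    IsGreatest {L : ℕ | ∃ t : List α, t <:+: S ∧ t.Nodup ∧ t.length = L}
      ((Finset.range S.length).sup fun y => y + 1 - xf y) := by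
  constructor
  · rcases Nat.eq_zero_or_pos S.length with h | h
    · have : (Finset.range S.length).sup (fun y => y + 1 - xf y) = 0 := by
        simp [h]
      rw [this]
      exact ⟨[], List.nil_infix, List.nodup_nil, rfl⟩
    · obtain ⟨y, hy, hsup⟩ := Finset.exists_mem_eq_sup (Finset.range S.length)
        (Finset.nonempty_range_iff.mpr h.ne') (fun y => y + 1 - xf y)
      rw [Finset.mem_range] at hy
      obtain ⟨hxy, hnd, _⟩ := hxf y hy
      rw [hsup]
      refine ⟨(S.drop (xf y)).take (y - xf y + 1),
        ((List.take_prefix _ _).isInfix).trans (List.drop_suffix _ _).isInfix, hnd, ?_⟩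
      rw [List.length_take, List.length_drop]
      omega
  · rintro L ⟨t, ⟨s, u, hsu⟩, hnd, hlen⟩
    rcases Nat.eq_zero_or_pos L with h | h
    · simp [h]
    have hSlen : S.length = s.length + t.length + u.length := by
      rw [← hsu]; simp; omega
    set x := s.length with hx
    set y := x + L - 1 with hy
    have hyS : y < S.length := by omega
    have hdrop : S.drop x = t ++ u := by
      rw [← hsu, List.append_assoc, List.drop_left]
    have ht : (S.drop x).take (y - x + 1) = t := by
      rw [hdrop]
      have : y - x + 1 = t.length := by omega
      rw [this, List.take_left]
    have hnodup : ((S.drop x).take (y - x + 1)).Nodup := ht ▸ hnd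
    obtain ⟨_, _, hmin⟩ := hxf y hyS
    have hxge : xf y ≤ x := by
      by_contra hc
      exact hmin x (by omega) hnodup
    have : L ≤ y + 1 - xf y := by omega
    exact le_trans this (Finset.le_sup (f := fun y => y + 1 - xf y) (Finset.mem_range.mpr hyS))
end
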